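/- Let q > 0 and define L(a) = ∫_1^∞ (v^{2q} − 1)^{−1/2} · sinh(a) · (1 + v² sinh(a)²)^{−1/2} dv for a > 0. Then L is differentiable on (0, ∞) with L'(a) = cosh(a) · ∫_1^∞ (v^{2q} − 1)^{−1/2} · (1 + v² sinh(a)²)^{−3/2} dv > 0. In particular L is strictly increasing on (0, ∞). -/

import Mathlib

open MeasureTheory Set Real Filter
set_option maxHeartbeats 1000000

namespace Stmt12Aux

/-- measurability of the integrand shape -/
lemma meas_aux (q r s : ℝ) :
    Measurable (fun v : ℝ => (v ^ (2*q) - 1) ^ (-(1:ℝ)/2) * (1 + v^2 * s^2) ^ r) := by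
  fun_prop

/-- `v^{2q} - 1 ≥ q (v-1)` for `1 < v ≤ 2`. -/
lemma lower1 (q : ℝ) (hq : 0 < q) {v : ℝ} (hv : 1 < v) (hv2 : v ≤ 2) :
    q * (v - 1) ≤ v ^ (2*q) - 1 := by
  have hv0 : 0 < v := lt_trans one_pos hv
  have h1 : v ^ (2*q) = Real.exp (2*q * Real.log v) := by
    rw [Real.rpow_def_of_pos hv0, mul_comm (Real.log v)]
  have h2 : 2*q * Real.log v + 1 ≤ Real.exp (2*q * Real.log v) := Real.add_one_le_exp _
  have h3 : 1 - 1/v ≤ Real.log v := by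
    have := Real.log_le_sub_one_of_pos (x := 1/v) (by positivity)
    rw [Real.log_div one_ne_zero hv0.ne', Real.log_one] at this
    linarith
  have h4 : q * (v-1) ≤ 2*q * (1 - 1/v) := by
    rw [show 2*q*(1-1/v) = 2*q*((v-1)/v) by field_simp]
    have : (v-1)/2 ≤ (v-1)/v := by
      apply div_le_div_of_nonneg_left (by linarith) (by linarith) hv2
    calc q * (v-1) = 2*q*((v-1)/2) := by ring
      _ ≤ 2*q*((v-1)/v) := by nlinarith
  have h5 : 2*q*(1-1/v) ≤ Real.log v * (2*q) := by nlinarith [h3]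
  nlinarith [h2, h3]

/-- `v^{2q} - 1 ≥ (1 - 2^{-2q}) v^{2q}` for `v ≥ 2`. -/
lemma lower2 (q : ℝ) (hq : 0 < q) {v : ℝ} (hv : 2 ≤ v) :
    (1 - (2:ℝ) ^ (-(2*q))) * v ^ (2*q) ≤ v ^ (2*q) - 1 := by
  have h2 : (2:ℝ) ^ (2*q) ≤ v ^ (2*q) :=
    Real.rpow_le_rpow (by norm_num) hv (by positivity)
  have h1 : (1:ℝ) ≤ (2:ℝ)^(-(2*q)) * v^(2*q) := by
    rw [Real.rpow_neg (by norm_num), inv_mul_eq_div, le_div_iff₀ (by positivity), one_mul]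
    exact h2
  nlinarith [Real.rpow_pos_of_pos (show (0:ℝ) < v by linarith) (2*q)]

end Stmt12Aux

namespace Stmt12Aux

lemma base_pos (q : ℝ) (hq : 0 < q) {v : ℝ} (hv : 1 < v) : 0 < v ^ (2*q) - 1 := by
  have : 1 < v ^ (2*q) :=
    Real.one_lt_rpow_iff_of_pos (lt_trans one_pos hv) |>.mpr (Or.inl ⟨hv, by positivity⟩)
  linarith

lemma int_g (q s r : ℝ) (hq : 0 < q) (hs : 0 < s) (hr : r ≤ -(1:ℝ)/2) :
    IntegrableOn (fun v : ℝ => (v ^ (2*q) - 1) ^ (-(1:ℝ)/2) * (1 + v^2 * s^2) ^ r)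
      (Ioi (1:ℝ)) := by
  have hr0 : r ≤ 0 := by linarith
  rw [← Ioc_union_Ioi_eq_Ioi (show (1:ℝ) ≤ 2 by norm_num)]
  apply MeasureTheory.IntegrableOn.union
  · -- near 1 : bound by q^{-1/2} (v-1)^{-1/2}
    have hb : IntegrableOn (fun v : ℝ => q ^ (-(1:ℝ)/2) * (v - 1) ^ (-(1:ℝ)/2)) (Ioc 1 2) := by
      have h0 : IntervalIntegrable (fun x : ℝ => x ^ (-(1:ℝ)/2)) volume 0 1 :=
        intervalIntegral.intervalIntegrable_rpow' (by norm_num)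
      have h1 := h0.comp_sub_right 1
      simp only [zero_add, one_add_one_eq_two] at h1
      exact ((intervalIntegrable_iff_integrableOn_Ioc_of_le (by norm_num)).mp h1).const_mul _
    apply hb.mono' ((meas_aux q r s).aestronglyMeasurable)
    rw [ae_restrict_iff' measurableSet_Ioc]
    refine Eventually.of_forall fun v hv => ?_
    obtain ⟨hv1, hv2⟩ := hv
    have hb1 : 0 < v ^ (2*q) - 1 := base_pos q hq hv1
    have hb2 : (0:ℝ) < 1 + v^2 * s^2 := by positivity
    rw [Real.norm_eq_abs, abs_of_nonneg (by positivity)]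
    have key : (v ^ (2*q) - 1) ^ (-(1:ℝ)/2) ≤ q ^ (-(1:ℝ)/2) * (v - 1) ^ (-(1:ℝ)/2) := by
      rw [← Real.mul_rpow hq.le (by linarith)]
      exact Real.rpow_le_rpow_of_nonpos (by nlinarith) (lower1 q hq hv1 hv2) (by norm_num)
    calc (v ^ (2*q) - 1) ^ (-(1:ℝ)/2) * (1 + v^2 * s^2) ^ r
        ≤ (v ^ (2*q) - 1) ^ (-(1:ℝ)/2) * 1 := by
          exact mul_le_mul_of_nonneg_left
            (Real.rpow_le_one_of_one_le_of_nonpos (by nlinarith) hr0)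
            (Real.rpow_pos_of_pos hb1 _).le
      _ = (v ^ (2*q) - 1) ^ (-(1:ℝ)/2) := mul_one _
      _ ≤ q ^ (-(1:ℝ)/2) * (v - 1) ^ (-(1:ℝ)/2) := key
  · -- tail : bound by C * v ^ (-q + 2r)
    set c : ℝ := 1 - (2:ℝ) ^ (-(2*q)) with hc
    have hc0 : 0 < c := by
      have : (2:ℝ) ^ (-(2*q)) < 1 := by
        apply Real.rpow_lt_one_of_one_lt_of_neg (by norm_num) (by linarith)
      simp [hc]; linarith
    have hb : IntegrableOn
        (fun v : ℝ => (c ^ (-(1:ℝ)/2) * (s^2) ^ r) * v ^ (-q + 2*r)) (Ioi 2) := by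
      apply Integrable.const_mul
      exact integrableOn_Ioi_rpow_of_lt (by linarith) (by norm_num)
    apply hb.mono' ((meas_aux q r s).aestronglyMeasurable)
    rw [ae_restrict_iff' measurableSet_Ioi]
    refine Eventually.of_forall fun v hv => ?_
    rw [mem_Ioi] at hv
    have hv1 : (1:ℝ) < v := by linarith
    have hv0 : (0:ℝ) < v := by linarith
    have hb1 : 0 < v ^ (2*q) - 1 := base_pos q hq hv1
    have hb2 : (0:ℝ) < 1 + v^2 * s^2 := by positivity
    rw [Real.norm_eq_abs, abs_of_nonneg (by positivity)]
    have key1 : (v ^ (2*q) - 1) ^ (-(1:ℝ)/2) ≤ c ^ (-(1:ℝ)/2) * v ^ (-q) := by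
      have e : c ^ (-(1:ℝ)/2) * v ^ (-q) = (c * v ^ (2*q)) ^ (-(1:ℝ)/2) := by
        rw [Real.mul_rpow hc0.le (Real.rpow_pos_of_pos hv0 _).le,
          ← Real.rpow_mul hv0.le, show 2*q*(-(1:ℝ)/2) = -q by ring]
      rw [e]
      exact Real.rpow_le_rpow_of_nonpos (by positivity) (lower2 q hq hv.le) (by norm_num)
    have key2 : (1 + v^2 * s^2) ^ r ≤ (s^2) ^ r * v ^ (2*r) := by
      have e : (s^2) ^ r * v ^ (2*r) = (v^2 * s^2) ^ r := by
        rw [Real.mul_rpow (by positivity) (by positivity), ← Real.rpow_natCast v 2,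
          ← Real.rpow_mul hv0.le, show ((2:ℕ):ℝ) * r = 2*r by norm_num]
        ring
      rw [e]
      exact Real.rpow_le_rpow_of_nonpos (by positivity) (by nlinarith) hr0
    calc (v ^ (2*q) - 1) ^ (-(1:ℝ)/2) * (1 + v^2 * s^2) ^ r
        ≤ (c ^ (-(1:ℝ)/2) * v ^ (-q)) * ((s^2) ^ r * v ^ (2*r)) := by
          apply mul_le_mul key1 key2 (Real.rpow_nonneg hb2.le _)
          positivity
      _ = (c ^ (-(1:ℝ)/2) * (s^2) ^ r) * (v ^ (-q) * v ^ (2*r)) := by ring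
      _ = (c ^ (-(1:ℝ)/2) * (s^2) ^ r) * v ^ (-q + 2*r) := by
          rw [← Real.rpow_add hv0]

end Stmt12Aux

namespace Stmt12Aux

lemma int_pos (q s r : ℝ) (hq : 0 < q) (hs : 0 < s) (hr : r ≤ -(1:ℝ)/2) :
    0 < ∫ v in Ioi (1:ℝ), (v ^ (2*q) - 1) ^ (-(1:ℝ)/2) * (1 + v^2 * s^2) ^ r := by
  have hpos : ∀ v ∈ Ioi (1:ℝ),
      0 < (v ^ (2*q) - 1) ^ (-(1:ℝ)/2) * (1 + v^2 * s^2) ^ r := by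
    intro v hv
    rw [mem_Ioi] at hv
    have h1 := base_pos q hq hv
    have h2 : (0:ℝ) < 1 + v^2 * s^2 := by positivity
    exact mul_pos (Real.rpow_pos_of_pos h1 _) (Real.rpow_pos_of_pos h2 _)
  rw [MeasureTheory.setIntegral_pos_iff_support_of_nonneg_ae]
  · refine lt_of_lt_of_le ?_ (measure_mono (fun v hv => ⟨(hpos v hv).ne', hv⟩))
    simp [Real.volume_Ioi]
  · exact (ae_restrict_iff' measurableSet_Ioi).mpr
      (Eventually.of_forall fun v hv => (hpos v hv).le)
  · exact int_g q s r hq hs hr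

lemma deriv_pt (v x : ℝ) :
    HasDerivAt (fun a : ℝ => Real.sinh a * (1 + v^2 * Real.sinh a ^ 2) ^ (-(1:ℝ)/2))
      (Real.cosh x * (1 + v^2 * Real.sinh x ^ 2) ^ (-(3:ℝ)/2)) x := by
  have hU : (0:ℝ) < 1 + v^2 * Real.sinh x ^ 2 := by positivity
  have hu : HasDerivAt (fun a : ℝ => 1 + v^2 * Real.sinh a ^ 2)
      (v^2 * (2 * Real.sinh x ^ 1 * Real.cosh x)) x := by
    exact (((Real.hasDerivAt_sinh x).pow 2).const_mul (v^2)).const_add 1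
  have h2 : HasDerivAt (fun a : ℝ => (1 + v^2 * Real.sinh a ^ 2) ^ (-(1:ℝ)/2))
      ((v^2 * (2 * Real.sinh x ^ 1 * Real.cosh x)) * (-(1:ℝ)/2) *
        (1 + v^2 * Real.sinh x ^ 2) ^ (-(1:ℝ)/2 - 1)) x :=
    hu.rpow_const (Or.inl hU.ne')
  have h3 : HasDerivAt (fun a : ℝ => Real.sinh a * (1 + v^2 * Real.sinh a ^ 2) ^ (-(1:ℝ)/2))
      (Real.cosh x * (1 + v^2 * Real.sinh x ^ 2) ^ (-(1:ℝ)/2) + Real.sinh x *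
        ((v^2 * (2 * Real.sinh x ^ 1 * Real.cosh x)) * (-(1:ℝ)/2) *
          (1 + v^2 * Real.sinh x ^ 2) ^ (-(1:ℝ)/2 - 1))) x :=
    (Real.hasDerivAt_sinh x).mul h2
  convert h3 using 1
  rw [show (-(1:ℝ)/2 - 1) = (-(3:ℝ)/2) by norm_num]
  have hsplit : (1 + v^2 * Real.sinh x ^ 2) ^ (-(1:ℝ)/2)
      = (1 + v^2 * Real.sinh x ^ 2) * (1 + v^2 * Real.sinh x ^ 2) ^ (-(3:ℝ)/2) := by
    nth_rewrite 2 [← Real.rpow_one (1 + v^2 * Real.sinh x ^ 2)]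
    rw [← Real.rpow_add hU]
    norm_num
  rw [hsplit]
  ring

end Stmt12Aux


/-- The half-height of the r-catenoid with neck radius `a` in `ℍⁿ × ℝ`. -/
noncomputable def catL (q a : ℝ) : ℝ :=
  ∫ v in Set.Ioi (1 : ℝ),
    (v ^ (2 * q) - 1) ^ (-(1 : ℝ) / 2) * Real.sinh a *
      (1 + v ^ 2 * Real.sinh a ^ 2) ^ (-(1 : ℝ) / 2)

open Stmt12Aux in
/-- `L` is differentiable on `(0, ∞)` with
`L'(a) = cosh(a) ∫_1^∞ (v^{2q}-1)^{-1/2} (1+v² sinh²(a))^{-3/2} dv > 0`,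
so `L` is strictly increasing on `(0, ∞)`. -/
theorem stmt_12 (q : ℝ) (hq : 0 < q) :
    (∀ a : ℝ, 0 < a →
      HasDerivAt (catL q)
        (Real.cosh a *
          ∫ v in Set.Ioi (1 : ℝ),
            (v ^ (2 * q) - 1) ^ (-(1 : ℝ) / 2) *
              (1 + v ^ 2 * Real.sinh a ^ 2) ^ (-(3 : ℝ) / 2)) a ∧
      0 < Real.cosh a *
          ∫ v in Set.Ioi (1 : ℝ),
            (v ^ (2 * q) - 1) ^ (-(1 : ℝ) / 2) *
              (1 + v ^ 2 * Real.sinh a ^ 2) ^ (-(3 : ℝ) / 2)) ∧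
    StrictMonoOn (catL q) (Set.Ioi 0) := by
  have key : ∀ a : ℝ, 0 < a →
      HasDerivAt (catL q)
        (Real.cosh a *
          ∫ v in Set.Ioi (1 : ℝ),
            (v ^ (2 * q) - 1) ^ (-(1 : ℝ) / 2) *
              (1 + v ^ 2 * Real.sinh a ^ 2) ^ (-(3 : ℝ) / 2)) a := by
    intro a ha
    have hsa : 0 < Real.sinh a := Real.sinh_pos_iff.mpr ha
    have hs₀ : 0 < Real.sinh (a/2) := Real.sinh_pos_iff.mpr (by linarith)
    have main := hasDerivAt_integral_of_dominated_loc_of_deriv_le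
      (μ := volume.restrict (Set.Ioi (1:ℝ))) (x₀ := a) (s := Metric.ball a (a/2))
      (F := fun x v => (v ^ (2*q) - 1) ^ (-(1:ℝ)/2) * Real.sinh x *
        (1 + v^2 * Real.sinh x ^ 2) ^ (-(1:ℝ)/2))
      (F' := fun x v => Real.cosh x * ((v ^ (2*q) - 1) ^ (-(1:ℝ)/2) *
        (1 + v^2 * Real.sinh x ^ 2) ^ (-(3:ℝ)/2)))
      (bound := fun v => Real.cosh (a + a/2) * ((v ^ (2*q) - 1) ^ (-(1:ℝ)/2) *
        (1 + v^2 * Real.sinh (a/2) ^ 2) ^ (-(3:ℝ)/2)))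
      (Metric.ball_mem_nhds a (by positivity))
      (Eventually.of_forall fun x => (by fun_prop : Measurable fun v : ℝ =>
        (v ^ (2*q) - 1) ^ (-(1:ℝ)/2) * Real.sinh x *
        (1 + v^2 * Real.sinh x ^ 2) ^ (-(1:ℝ)/2)).aestronglyMeasurable)
      (((int_g q (Real.sinh a) (-(1:ℝ)/2) hq hsa le_rfl).const_mul (Real.sinh a)).congr
        (Eventually.of_forall fun v => by ring))
      ((by fun_prop : Measurable fun v : ℝ => Real.cosh a * ((v ^ (2*q) - 1) ^ (-(1:ℝ)/2) *
        (1 + v^2 * Real.sinh a ^ 2) ^ (-(3:ℝ)/2))).aestronglyMeasurable)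
      ?_ ((int_g q (Real.sinh (a/2)) (-(3:ℝ)/2) hq hs₀ (by norm_num)).const_mul _)
      (Eventually.of_forall fun v x _ => by
        have h := (deriv_pt v x).const_mul ((v ^ (2*q) - 1) ^ (-(1:ℝ)/2))
        have h2 := h.congr_of_eventuallyEq
          (Eventually.of_forall fun y => (mul_assoc ((v ^ (2*q) - 1) ^ (-(1:ℝ)/2))
            (Real.sinh y) ((1 + v^2 * Real.sinh y ^ 2) ^ (-(1:ℝ)/2))))
        convert h2 using 1
        ring)
    · have hd := main.2
      rw [MeasureTheory.integral_const_mul] at hd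
      exact hd
    · -- the uniform bound
      refine (ae_restrict_iff' measurableSet_Ioi).mpr (Eventually.of_forall fun v hv => ?_)
      intro x hx
      rw [Set.mem_Ioi] at hv
      rw [Metric.mem_ball, Real.dist_eq] at hx
      have hx' := abs_lt.mp hx
      have hx0 : 0 < x := by linarith
      have hb1 : 0 < v ^ (2*q) - 1 := base_pos q hq hv
      have hUx : (0:ℝ) < 1 + v^2 * Real.sinh x ^ 2 := by positivity
      have hU0 : (0:ℝ) < 1 + v^2 * Real.sinh (a/2) ^ 2 := by positivity
      have hcosh : Real.cosh x ≤ Real.cosh (a + a/2) := by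
        rw [Real.cosh_le_cosh, abs_of_pos hx0, abs_of_pos (by linarith)]
        linarith
      have hsinh : Real.sinh (a/2) ≤ Real.sinh x := Real.sinh_le_sinh.mpr (by linarith)
      have hW : (1 + v^2 * Real.sinh x ^ 2) ^ (-(3:ℝ)/2)
          ≤ (1 + v^2 * Real.sinh (a/2) ^ 2) ^ (-(3:ℝ)/2) := by
        apply Real.rpow_le_rpow_of_nonpos hU0 _ (by norm_num)
        have : Real.sinh (a/2) ^ 2 ≤ Real.sinh x ^ 2 := by nlinarith
        nlinarith
      rw [Real.norm_eq_abs, abs_of_nonneg (by positivity)]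
      apply mul_le_mul hcosh
        (mul_le_mul_of_nonneg_left hW (Real.rpow_nonneg hb1.le _))
        (by positivity) (Real.cosh_pos (a + a/2)).le
  refine ⟨fun a ha => ⟨key a ha, ?_⟩, ?_⟩
  · exact mul_pos (Real.cosh_pos _)
      (int_pos q (Real.sinh a) (-(3:ℝ)/2) hq (Real.sinh_pos_iff.mpr ha) (by norm_num))
  · apply strictMonoOn_of_deriv_pos (convex_Ioi 0)
    · exact fun x hx => ((key x hx).differentiableAt).continuousAt.continuousWithinAt
    · intro x hx
      rw [interior_Ioi] at hx
      rw [(key x hx).deriv]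
      exact mul_pos (Real.cosh_pos _)
        (int_pos q (Real.sinh x) (-(3:ℝ)/2) hq (Real.sinh_pos_iff.mpr hx) (by norm_num))
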